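/- Let (Ω, ℱ₂, P) be a probability space with sub-σ-algebra ℱ₁ ⊆ ℱ₂ and suppose there exists an atomless sub-σ-algebra ℬ ⊆ ℱ₂ independent of ℱ₁. Then there exists an ℱ₂-measurable random variable U : Ω → [0,1], uniformly distributed on [0,1] and independent of ℱ₁. -/

import Mathlib

open MeasureTheory ProbabilityTheory
open scoped ENNReal NNReal

/-- The conditional expectation of the indicator of a set, as a real-valued function. -/
noncomputable def condIndicator {Ω : Type*} (m1 : MeasurableSpace Ω) [MeasurableSpace Ω]
    (μ : Measure Ω) (A : Set Ω) : Ω → ℝ :=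
  μ[A.indicator (fun _ => (1 : ℝ)) | m1]

/-- The ambient σ-algebra is atomless conditionally to `m1`: for every measurable set `A`
there is a measurable `B ⊆ A` with `0 < E[1_B ∣ m1] < E[1_A ∣ m1]` a.s. on
`{E[1_A ∣ m1] > 0}`. -/
def CondAtomless {Ω : Type*} (m1 : MeasurableSpace Ω) [MeasurableSpace Ω]
    (μ : Measure Ω) : Prop :=
  ∀ A : Set Ω, MeasurableSet A →
    ∃ B : Set Ω, MeasurableSet B ∧ B ⊆ A ∧
      ∀ᵐ ω ∂μ, 0 < condIndicator m1 μ A ω →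
        0 < condIndicator m1 μ B ω ∧ condIndicator m1 μ B ω < condIndicator m1 μ A ω

/-- Two real random variables are commonotone if both are a.s. equal to nondecreasing
functions of a common random variable. -/
def Commonotone {Ω : Type*} [MeasurableSpace Ω] (μ : Measure Ω) (ξ η : Ω → ℝ) : Prop :=
  ∃ (f g : ℝ → ℝ) (ζ : Ω → ℝ), Monotone f ∧ Monotone g ∧ Measurable ζ ∧
    ξ =ᵐ[μ] (fun ω => f (ζ ω)) ∧ η =ᵐ[μ] (fun ω => g (ζ ω))

/-- A sub-σ-algebra `mB` is atomless for `μ` if every `mB`-measurable set of positive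
measure contains an `mB`-measurable subset of strictly smaller positive measure. -/
def SigmaAlgebraAtomless {Ω : Type*} (mB : MeasurableSpace Ω) [MeasurableSpace Ω]
    (μ : Measure Ω) : Prop :=
  ∀ A : Set Ω, MeasurableSet[mB] A → 0 < μ A →
    ∃ B : Set Ω, MeasurableSet[mB] B ∧ B ⊆ A ∧ 0 < μ B ∧ μ B < μ A

section AuxAtomless
open Set

variable {Ω : Type*} {mB : MeasurableSpace Ω} [m2 : MeasurableSpace Ω] {μ : Measure Ω}

/-- Halving: every positive set has a positive subset of at most half its measure. -/
lemma aux_half (hmB : mB ≤ m2) [IsFiniteMeasure μ]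
    (hat : ∀ A : Set Ω, MeasurableSet[mB] A → 0 < μ A →
      ∃ B : Set Ω, MeasurableSet[mB] B ∧ B ⊆ A ∧ 0 < μ B ∧ μ B < μ A)
    {A : Set Ω} (hA : MeasurableSet[mB] A) (hA0 : 0 < μ A) :
    ∃ B, MeasurableSet[mB] B ∧ B ⊆ A ∧ 0 < μ B ∧ μ B ≤ μ A / 2 := by
  obtain ⟨B, hBm, hBA, hB0, hBlt⟩ := hat A hA hA0
  by_cases h : μ B ≤ μ A / 2
  · exact ⟨B, hBm, hBA, hB0, h⟩
  · push_neg at h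
    have hd : μ (A \ B) = μ A - μ B :=
      measure_diff hBA (hmB _ hBm).nullMeasurableSet (measure_ne_top μ B)
    refine ⟨A \ B, hA.diff hBm, diff_subset, ?_, ?_⟩
    · rw [hd]; exact tsub_pos_of_lt hBlt
    · rw [hd]
      refine tsub_le_iff_right.mpr ?_
      calc μ A = μ A / 2 + μ A / 2 := (ENNReal.add_halves _).symm
      _ ≤ μ A / 2 + μ B := add_le_add_right h.le _

lemma aux_small (hmB : mB ≤ m2) [IsProbabilityMeasure μ]
    (hat : ∀ A : Set Ω, MeasurableSet[mB] A → 0 < μ A →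
      ∃ B : Set Ω, MeasurableSet[mB] B ∧ B ⊆ A ∧ 0 < μ B ∧ μ B < μ A)
    {A : Set Ω} (hA : MeasurableSet[mB] A) (hA0 : 0 < μ A) {ε : ℝ≥0∞} (hε : ε ≠ 0) :
    ∃ B, MeasurableSet[mB] B ∧ B ⊆ A ∧ 0 < μ B ∧ μ B ≤ ε := by
  have key : ∀ n : ℕ, ∃ B, MeasurableSet[mB] B ∧ B ⊆ A ∧ 0 < μ B ∧ μ B ≤ 2⁻¹ ^ n := by
    intro n
    induction n with
    | zero =>
      refine ⟨A, hA, subset_rfl, hA0, ?_⟩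
      simpa using (prob_le_one (μ := μ) (s := A))
    | succ n ih =>
      obtain ⟨B, hBm, hBA, hB0, hBle⟩ := ih
      obtain ⟨C, hCm, hCB, hC0, hCle⟩ := aux_half hmB hat hBm hB0
      refine ⟨C, hCm, hCB.trans hBA, hC0, ?_⟩
      calc μ C ≤ μ B / 2 := hCle
      _ ≤ 2⁻¹ ^ n / 2 := by gcongr
      _ = 2⁻¹ ^ (n + 1) := by
        rw [pow_succ, div_eq_mul_inv]
  obtain ⟨n, hn⟩ := ENNReal.exists_inv_two_pow_lt hε
  obtain ⟨B, hBm, hBA, hB0, hBle⟩ := key n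
  exact ⟨B, hBm, hBA, hB0, hBle.trans hn.le⟩

/-- The middle-third lemma: every positive set has a subset with measure in `(μ A / 4, μ A / 2]`. -/
lemma aux_mid (hmB : mB ≤ m2) [IsProbabilityMeasure μ]
    (hat : ∀ A : Set Ω, MeasurableSet[mB] A → 0 < μ A →
      ∃ B : Set Ω, MeasurableSet[mB] B ∧ B ⊆ A ∧ 0 < μ B ∧ μ B < μ A)
    {A : Set Ω} (hA : MeasurableSet[mB] A) (hA0 : 0 < μ A) :
    ∃ B, MeasurableSet[mB] B ∧ B ⊆ A ∧ μ A / 4 < μ B ∧ μ B ≤ μ A / 2 := by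
  by_contra hcon
  push_neg at hcon
  have key : ∀ B : Set Ω, MeasurableSet[mB] B → B ⊆ A → μ B ≤ μ A / 2 → μ B ≤ μ A / 4 := by
    intro B hBm hBA hB2
    by_contra h
    push_neg at h
    exact absurd hB2 (not_le.mpr (hcon B hBm hBA h))
  set S : Set ℝ≥0∞ := {r | ∃ B : Set Ω, MeasurableSet[mB] B ∧ B ⊆ A ∧ μ B = r ∧ r ≤ μ A / 4}
    with hS
  have h0S : (0 : ℝ≥0∞) ∈ S :=
    ⟨∅, @MeasurableSet.empty _ mB, empty_subset _, measure_empty, zero_le⟩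
  set t : ℝ≥0∞ := sSup S with ht
  have ht4 : t ≤ μ A / 4 := sSup_le (fun r hr => by obtain ⟨B, -, -, -, h⟩ := hr; exact h)
  have httop : t ≠ ∞ := (ht4.trans_lt (ENNReal.div_lt_top (measure_ne_top μ A) (by norm_num))).ne
  have hseq : ∀ n : ℕ, ∃ B : Set Ω, MeasurableSet[mB] B ∧ B ⊆ A ∧ μ B ≤ μ A / 4 ∧
      t - ((n : ℝ≥0∞) + 1)⁻¹ ≤ μ B := by
    intro n
    rcases eq_or_ne t 0 with h0 | h0
    · exact ⟨∅, @MeasurableSet.empty _ mB, empty_subset _, by simp, by simp [h0, zero_tsub]⟩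
    · have hlt : t - ((n : ℝ≥0∞) + 1)⁻¹ < t :=
        ENNReal.sub_lt_self httop h0 (by simp)
      obtain ⟨r, hrS, hrlt⟩ := lt_sSup_iff.mp hlt
      obtain ⟨B, hBm, hBA, rfl, hle⟩ := hrS
      exact ⟨B, hBm, hBA, hle, hrlt.le⟩
  choose Bn hBnm hBnA hBn4 hBnt using hseq
  have hacc4 : ∀ n, μ (accumulate Bn n) ≤ μ A / 4 := by
    intro n
    induction n with
    | zero =>
      have h0 : accumulate Bn 0 = Bn 0 := by
        ext x; simp [Set.mem_accumulate, Nat.le_zero]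
      rw [h0]; exact hBn4 0
    | succ n ih =>
      have hsub : accumulate Bn (n + 1) ⊆ A := by
        intro x hx
        rcases Set.mem_iUnion₂.mp hx with ⟨i, _, hi⟩
        exact hBnA i hi
      have hm : MeasurableSet[mB] (accumulate Bn (n + 1)) :=
        MeasurableSet.biUnion (Set.to_countable _) (fun i _ => hBnm i)
      refine key _ hm hsub ?_
      have : accumulate Bn (n + 1) = accumulate Bn n ∪ Bn (n + 1) := by
        ext x
        simp only [Set.mem_accumulate, Set.mem_union, Nat.le_succ_iff]
        constructor
        · rintro ⟨y, hy | hy, hxy⟩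
          · exact Or.inl ⟨y, hy, hxy⟩
          · subst hy; exact Or.inr hxy
        · rintro (⟨y, hy, hxy⟩ | hx)
          · exact ⟨y, Or.inl hy, hxy⟩
          · exact ⟨n + 1, Or.inr rfl, hx⟩
      rw [this]
      calc μ (accumulate Bn n ∪ Bn (n + 1)) ≤ μ (accumulate Bn n) + μ (Bn (n + 1)) :=
        measure_union_le _ _
      _ ≤ μ A / 4 + μ A / 4 := add_le_add ih (hBn4 _)
      _ = μ A / 2 := by
        rw [ENNReal.div_add_div_same, ← two_mul]
        rw [show (4 : ℝ≥0∞) = 2 * 2 by norm_num]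
        exact ENNReal.mul_div_mul_left _ _ (by norm_num) (by norm_num)
  set C : Set Ω := ⋃ n, Bn n with hC
  have hCm : MeasurableSet[mB] C := MeasurableSet.iUnion hBnm
  have hCA : C ⊆ A := Set.iUnion_subset hBnA
  have hC4 : μ C ≤ μ A / 4 := by
    rw [hC, measure_iUnion_eq_iSup_accumulate]
    exact iSup_le hacc4
  have htC : t ≤ μ C := by
    refine ENNReal.le_of_forall_pos_le_add (fun ε hε _ => ?_)
    obtain ⟨n, hn⟩ := ENNReal.exists_inv_nat_lt (a := (ε : ℝ≥0∞)) (by simpa using hε.ne')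
    have h1 : t - ((n : ℝ≥0∞) + 1)⁻¹ ≤ μ C :=
      (hBnt n).trans (measure_mono (Set.subset_iUnion _ n))
    have h2 : ((n : ℝ≥0∞) + 1)⁻¹ ≤ (ε : ℝ≥0∞) := by
      refine le_trans ?_ hn.le
      exact ENNReal.inv_le_inv.mpr le_self_add
    calc t ≤ μ C + ((n : ℝ≥0∞) + 1)⁻¹ := tsub_le_iff_right.mp h1
    _ ≤ μ C + ε := add_le_add_right h2 _
  have hCt : μ C = t := le_antisymm (le_sSup ⟨C, hCm, hCA, rfl, hC4⟩) htC
  have hdiffpos : 0 < μ (A \ C) := by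
    have hd : μ (A \ C) = μ A - μ C :=
      measure_diff hCA (hmB _ hCm).nullMeasurableSet (measure_ne_top μ C)
    rw [hd]
    refine tsub_pos_of_lt (lt_of_le_of_lt hC4 ?_)
    calc μ A / 4 ≤ μ A / 2 := ENNReal.div_le_div_left (by norm_num) _
    _ < μ A := ENNReal.half_lt_self hA0.ne' (measure_ne_top μ A)
  obtain ⟨D, hDm, hDA, hD0, hD4⟩ := aux_small hmB hat (hA.diff hCm) hdiffpos
    (ε := μ A / 4) (by simp [ENNReal.div_eq_zero_iff, hA0.ne'])
  have hdisj : Disjoint C D := by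
    refine Set.disjoint_left.mpr (fun x hxC hxD => ?_)
    exact (hDA hxD).2 hxC
  have hEm : MeasurableSet[mB] (C ∪ D) := hCm.union hDm
  have hEA : C ∪ D ⊆ A := Set.union_subset hCA (hDA.trans diff_subset)
  have hEμ : μ (C ∪ D) = μ C + μ D := measure_union hdisj (hmB _ hDm)
  have hE2 : μ (C ∪ D) ≤ μ A / 2 := by
    rw [hEμ]
    calc μ C + μ D ≤ μ A / 4 + μ A / 4 := add_le_add hC4 hD4
    _ = μ A / 2 := by
      rw [ENNReal.div_add_div_same, ← two_mul]
      rw [show (4 : ℝ≥0∞) = 2 * 2 by norm_num]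
      exact ENNReal.mul_div_mul_left _ _ (by norm_num) (by norm_num)
  have hEle : μ (C ∪ D) ≤ t := le_sSup ⟨C ∪ D, hEm, hEA, rfl, key _ hEm hEA hE2⟩
  have : t < μ (C ∪ D) := by
    rw [hEμ, ← hCt]
    exact ENNReal.lt_add_right (measure_ne_top μ C) hD0.ne'
  exact absurd hEle (not_le.mpr this)

end AuxAtomless

section Tree
open Set
open scoped Classical

variable {Ω : Type*}

/-- Cells of the bisection tree. -/
def treeCell (bis : Set Ω → Set Ω) : List Bool → Set Ω
  | [] => Set.univ
  | b :: s => if b then bis (treeCell bis s) else treeCell bis s \ bis (treeCell bis s)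

/-- The address of depth `n` of a point in the bisection tree. -/
noncomputable def sigCode (bis : Set Ω → Set Ω) : ℕ → Ω → List Bool
  | 0, _ => []
  | n + 1, ω => (decide (ω ∈ bis (treeCell bis (sigCode bis n ω)))) :: sigCode bis n ω

/-- The `k`-th digit contribution. -/
noncomputable def rfun (bis : Set Ω → Set Ω) (k : ℕ) (ω : Ω) : ℝ :=
  Set.indicator {ω' | ω' ∈ bis (treeCell bis (sigCode bis k ω'))} (fun _ => ((3:ℝ)⁻¹) ^ (k + 1)) ω

/-- The random variable coding the branch of a point. -/
noncomputable def xRaw (bis : Set Ω → Set Ω) (ω : Ω) : ℝ := ∑' k, rfun bis k ω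

variable {bis : Set Ω → Set Ω}

lemma rfun_eq (k : ℕ) (ω : Ω) :
    rfun bis k ω = if ω ∈ bis (treeCell bis (sigCode bis k ω)) then ((3:ℝ)⁻¹) ^ (k + 1) else 0 := by
  rw [rfun, Set.indicator_apply]
  simp only [Set.mem_setOf_eq]

lemma sigCode_succ (n : ℕ) (ω : Ω) :
    sigCode bis (n + 1) ω
      = (decide (ω ∈ bis (treeCell bis (sigCode bis n ω)))) :: sigCode bis n ω := rfl

lemma mem_treeCell_sigCode (n : ℕ) (ω : Ω) : ω ∈ treeCell bis (sigCode bis n ω) := by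
  induction n with
  | zero => exact Set.mem_univ ω
  | succ n ih =>
    rw [sigCode_succ]
    by_cases h : ω ∈ bis (treeCell bis (sigCode bis n ω))
    · rw [decide_eq_true h]
      simpa [treeCell] using h
    · rw [decide_eq_false h]
      simp only [treeCell, if_neg (Bool.false_ne_true)]
      exact ⟨ih, h⟩

lemma sigCode_eq_of_le {ω ω' : Ω} {n k : ℕ} (hk : k ≤ n)
    (h : sigCode bis n ω = sigCode bis n ω') : sigCode bis k ω = sigCode bis k ω' := by
  induction n with
  | zero => simpa [Nat.le_zero.mp hk] using h
  | succ n ih =>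
    rcases Nat.le_succ_iff.mp hk with hk' | hk'
    · rw [sigCode_succ, sigCode_succ] at h
      exact ih hk' (List.tail_eq_of_cons_eq h)
    · subst hk'; exact h

lemma rfun_eq_of_sigCode {ω ω' : Ω} {k : ℕ}
    (h : sigCode bis (k + 1) ω = sigCode bis (k + 1) ω') : rfun bis k ω = rfun bis k ω' := by
  rw [sigCode_succ, sigCode_succ] at h
  have h1 := List.head_eq_of_cons_eq h
  have h2 := List.tail_eq_of_cons_eq h
  have hiff : (ω ∈ bis (treeCell bis (sigCode bis k ω)))
      ↔ (ω' ∈ bis (treeCell bis (sigCode bis k ω'))) := by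
    rw [← decide_eq_decide]
    convert h1 using 2
  rw [rfun_eq, rfun_eq]
  by_cases hm : ω ∈ bis (treeCell bis (sigCode bis k ω))
  · rw [if_pos hm, if_pos (hiff.mp hm)]
  · rw [if_neg hm, if_neg (fun hc => hm (hiff.mpr hc))]

lemma rfun_nonneg (k : ℕ) (ω : Ω) : 0 ≤ rfun bis k ω := by
  rw [rfun_eq]
  split <;> positivity

lemma rfun_le (k : ℕ) (ω : Ω) : rfun bis k ω ≤ ((3:ℝ)⁻¹) ^ (k + 1) := by
  rw [rfun_eq]
  split
  · exact le_refl _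
  · positivity

lemma summable_rfun (ω : Ω) : Summable (fun k => rfun bis k ω) := by
  refine Summable.of_nonneg_of_le (fun k => rfun_nonneg k ω) (fun k => rfun_le k ω) ?_
  have : Summable (fun k : ℕ => ((3:ℝ)⁻¹) ^ k) :=
    summable_geometric_of_lt_one (by norm_num) (by norm_num)
  simpa [pow_succ, mul_comm] using this.mul_left (3:ℝ)⁻¹

end Tree

section Tree2
open Set Filter
open scoped Classical Topology

variable {Ω : Type*} {bis : Set Ω → Set Ω}

lemma tail_bound (n : ℕ) (ω : Ω) :
    ∑' k, rfun bis (k + (n + 1)) ω ≤ ((3:ℝ)⁻¹) ^ (n + 1) / 2 := by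
  have hsum : Summable (fun k => rfun bis (k + (n + 1)) ω) :=
    (summable_rfun ω).comp_injective (add_left_injective (n + 1))
  have hgeom : Summable (fun k : ℕ => ((3:ℝ)⁻¹) ^ (k + (n + 1) + 1)) := by
    have h3 : Summable (fun k : ℕ => ((3:ℝ)⁻¹) ^ k) :=
      summable_geometric_of_lt_one (by norm_num) (by norm_num)
    exact (summable_nat_add_iff (n + 2)).mpr h3
  calc ∑' k, rfun bis (k + (n + 1)) ω ≤ ∑' k, ((3:ℝ)⁻¹) ^ (k + (n + 1) + 1) :=
    Summable.tsum_le_tsum (fun k => rfun_le _ ω) hsum hgeom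
  _ = ∑' k, ((3:ℝ)⁻¹) ^ k * ((3:ℝ)⁻¹) ^ (n + 2) := by
    congr 1; funext k; rw [← pow_add]; ring_nf
  _ = (1 - (3:ℝ)⁻¹)⁻¹ * ((3:ℝ)⁻¹) ^ (n + 2) := by
    rw [tsum_mul_right, tsum_geometric_of_lt_one (by norm_num) (by norm_num)]
  _ = ((3:ℝ)⁻¹) ^ (n + 1) / 2 := by
    have h : (1 - (3:ℝ)⁻¹)⁻¹ = 3 / 2 := by norm_num
    rw [h, pow_succ]
    ring

lemma xRaw_lt {ω ω' : Ω} {n : ℕ} (hσ : sigCode bis n ω = sigCode bis n ω')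
    (hmem : ω ∈ bis (treeCell bis (sigCode bis n ω)))
    (hmem' : ω' ∉ bis (treeCell bis (sigCode bis n ω'))) :
    xRaw bis ω' < xRaw bis ω := by
  have hfin : ∀ k ∈ Finset.range n, rfun bis k ω' = rfun bis k ω := by
    intro k hk
    exact (rfun_eq_of_sigCode (sigCode_eq_of_le (Finset.mem_range.mp hk) hσ)).symm
  have hsplit : ∀ x : Ω, xRaw bis x
      = ∑ k ∈ Finset.range (n + 1), rfun bis k x + ∑' k, rfun bis (k + (n + 1)) x :=
    fun x => (Summable.sum_add_tsum_nat_add (n + 1) (summable_rfun x)).symm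
  have hrn : rfun bis n ω = ((3:ℝ)⁻¹) ^ (n + 1) := by rw [rfun_eq, if_pos hmem]
  have hrn' : rfun bis n ω' = 0 := by rw [rfun_eq, if_neg hmem']
  have hsum_eq : ∑ k ∈ Finset.range n, rfun bis k ω' = ∑ k ∈ Finset.range n, rfun bis k ω :=
    Finset.sum_congr rfl hfin
  have h1 : ∑ k ∈ Finset.range n, rfun bis k ω + ((3:ℝ)⁻¹) ^ (n + 1) ≤ xRaw bis ω := by
    rw [hsplit ω, Finset.sum_range_succ, hrn]
    have : (0:ℝ) ≤ ∑' k, rfun bis (k + (n + 1)) ω := tsum_nonneg (fun k => rfun_nonneg _ ω)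
    linarith
  have h2 : xRaw bis ω' ≤ ∑ k ∈ Finset.range n, rfun bis k ω + ((3:ℝ)⁻¹) ^ (n + 1) / 2 := by
    rw [hsplit ω', Finset.sum_range_succ, hrn', hsum_eq]
    have := tail_bound (bis := bis) n ω'
    linarith
  have hhalf : ((3:ℝ)⁻¹) ^ (n + 1) / 2 < ((3:ℝ)⁻¹) ^ (n + 1) := by
    have : (0:ℝ) < ((3:ℝ)⁻¹) ^ (n + 1) := by positivity
    linarith
  linarith

lemma sigCode_eq_of_xRaw {ω ω' : Ω} (h : xRaw bis ω = xRaw bis ω') (n : ℕ) :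
    sigCode bis n ω = sigCode bis n ω' := by
  induction n with
  | zero => rfl
  | succ n ih =>
    rw [sigCode_succ, sigCode_succ, ih]
    have e : bis (treeCell bis (sigCode bis n ω)) = bis (treeCell bis (sigCode bis n ω')) := by
      rw [ih]
    by_cases h1 : ω ∈ bis (treeCell bis (sigCode bis n ω')) <;>
      by_cases h2 : ω' ∈ bis (treeCell bis (sigCode bis n ω'))
    · congr 1
      exact decide_eq_decide.mpr (iff_of_true h1 h2)
    · exact absurd h ((xRaw_lt ih (by rw [e]; exact h1) h2).ne')
    · exact absurd h ((xRaw_lt ih.symm h2 (by rw [e]; exact h1)).ne)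
    · congr 1
      exact decide_eq_decide.mpr (iff_of_false h1 h2)

variable {mB : MeasurableSpace Ω}

lemma treeCell_meas (hbm : ∀ A : Set Ω, MeasurableSet[mB] A → MeasurableSet[mB] (bis A)) :
    ∀ s : List Bool, MeasurableSet[mB] (treeCell bis s) := by
  intro s
  induction s with
  | nil => exact MeasurableSet.univ
  | cons b s ih =>
    cases b
    · exact ih.diff (hbm _ ih)
    · simpa [treeCell] using hbm _ ih

lemma sigCode_meas (hbm : ∀ A : Set Ω, MeasurableSet[mB] A → MeasurableSet[mB] (bis A)) :
    ∀ (n : ℕ) (s : List Bool), MeasurableSet[mB] {ω | sigCode bis n ω = s} := by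
  intro n
  induction n with
  | zero =>
    intro s
    cases s with
    | nil => simp only [sigCode]; exact MeasurableSet.univ
    | cons b tl => simp only [sigCode]; simpa using (@MeasurableSet.empty _ mB)
  | succ n ih =>
    intro s
    cases s with
    | nil =>
      have : {ω : Ω | sigCode bis (n+1) ω = []} = ∅ := by
        ext ω; simp [sigCode_succ]
      rw [this]; exact @MeasurableSet.empty _ mB
    | cons b tl =>
      have hset : {ω : Ω | sigCode bis (n+1) ω = b :: tl}
          = {ω : Ω | sigCode bis n ω = tl} ∩
            (if b then bis (treeCell bis tl) else (bis (treeCell bis tl))ᶜ) := by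
      
        ext ω
        simp only [sigCode_succ, Set.mem_setOf_eq, List.cons.injEq, Set.mem_inter_iff]
        constructor
        · rintro ⟨hb, htl⟩
          refine ⟨htl, ?_⟩
          rw [← hb]
          cases hmem : decide (ω ∈ bis (treeCell bis (sigCode bis n ω)))
          · have := of_decide_eq_false hmem
            rw [htl] at this
            simpa using this
          · have := of_decide_eq_true hmem
            rw [htl] at this
            simpa using this
        · rintro ⟨htl, hb⟩
          refine ⟨?_, htl⟩
          cases b
          · rw [if_neg (by simp)] at hb
            exact decide_eq_false (by rw [htl]; exact hb)
          · rw [if_pos rfl] at hb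
            exact decide_eq_true (by rw [htl]; exact hb)
      rw [hset]
      refine (ih tl).inter ?_
      cases b
      · simpa using (hbm _ (treeCell_meas hbm tl)).compl
      · simpa using hbm _ (treeCell_meas hbm tl)

lemma dset_meas (hbm : ∀ A : Set Ω, MeasurableSet[mB] A → MeasurableSet[mB] (bis A)) (k : ℕ) :
    MeasurableSet[mB] {ω : Ω | ω ∈ bis (treeCell bis (sigCode bis k ω))} := by
  have : {ω : Ω | ω ∈ bis (treeCell bis (sigCode bis k ω))}
      = ⋃ s : List Bool, ({ω : Ω | sigCode bis k ω = s} ∩ bis (treeCell bis s)) := by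
    ext ω
    simp only [Set.mem_setOf_eq, Set.mem_iUnion, Set.mem_inter_iff]
    constructor
    · intro h; exact ⟨sigCode bis k ω, rfl, h⟩
    · rintro ⟨s, hs, h⟩; rwa [hs]
  rw [this]
  exact MeasurableSet.iUnion (fun s => (sigCode_meas hbm k s).inter (hbm _ (treeCell_meas hbm s)))

lemma rfun_meas (hbm : ∀ A : Set Ω, MeasurableSet[mB] A → MeasurableSet[mB] (bis A)) (k : ℕ) :
    Measurable[mB] (rfun bis k) :=
  measurable_const.indicator (dset_meas hbm k)

lemma xRaw_meas (hbm : ∀ A : Set Ω, MeasurableSet[mB] A → MeasurableSet[mB] (bis A)) :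
    Measurable[mB] (xRaw bis) := by
  refine measurable_of_tendsto_metrizable'
    (f := fun n ω => ∑ k ∈ Finset.range n, rfun bis k ω) atTop
    (fun n => Finset.measurable_sum _ (fun k _ => rfun_meas hbm k)) ?_
  rw [tendsto_pi_nhds]
  intro ω
  exact (summable_rfun ω).hasSum.tendsto_sum_nat

end Tree2

section Tree3
open Set Filter
open scoped Classical Topology

variable {Ω : Type*} {bis : Set Ω → Set Ω} {mB : MeasurableSpace Ω} [m2 : MeasurableSpace Ω]
  {μ : Measure Ω}

lemma treeCell_measure_le [IsProbabilityMeasure μ]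
    (hbis : ∀ A : Set Ω, MeasurableSet[mB] A → MeasurableSet[mB] (bis A) ∧ bis A ⊆ A ∧
      μ (bis A) ≤ 3/4 * μ A ∧ μ (A \ bis A) ≤ 3/4 * μ A) :
    ∀ s : List Bool, μ (treeCell bis s) ≤ (3/4 : ℝ≥0∞) ^ s.length := by
  intro s
  induction s with
  | nil =>
    simp only [treeCell, List.length_nil, pow_zero, measure_univ, le_refl]
  | cons b s ih =>
    have hm := treeCell_meas (fun A hA => (hbis A hA).1) s
    have hlen : (b :: s).length = s.length + 1 := List.length_cons
    rw [hlen, pow_succ]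
    cases b
    · have e : treeCell bis (false :: s) = treeCell bis s \ bis (treeCell bis s) := by
        simp [treeCell]
      rw [e]
      calc μ (treeCell bis s \ bis (treeCell bis s)) ≤ 3/4 * μ (treeCell bis s) :=
        (hbis _ hm).2.2.2
      _ ≤ 3/4 * (3/4 : ℝ≥0∞) ^ s.length := by gcongr
      _ = (3/4 : ℝ≥0∞) ^ s.length * (3/4) := mul_comm _ _
    · have e : treeCell bis (true :: s) = bis (treeCell bis s) := by
        simp [treeCell]
      rw [e]
      calc μ (bis (treeCell bis s)) ≤ 3/4 * μ (treeCell bis s) := (hbis _ hm).2.2.1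
      _ ≤ 3/4 * (3/4 : ℝ≥0∞) ^ s.length := by gcongr
      _ = (3/4 : ℝ≥0∞) ^ s.length * (3/4) := mul_comm _ _

lemma xRaw_fiber_null [IsProbabilityMeasure μ]
    (hbis : ∀ A : Set Ω, MeasurableSet[mB] A → MeasurableSet[mB] (bis A) ∧ bis A ⊆ A ∧
      μ (bis A) ≤ 3/4 * μ A ∧ μ (A \ bis A) ≤ 3/4 * μ A) (x : ℝ) :
    μ (xRaw bis ⁻¹' {x}) = 0 := by
  by_cases hne : (xRaw bis ⁻¹' {x}).Nonempty
  · obtain ⟨ω₀, hω₀⟩ := hne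
    have hsub : ∀ n : ℕ, xRaw bis ⁻¹' {x} ⊆ treeCell bis (sigCode bis n ω₀) := by
      intro n ω hω
      have hx : xRaw bis ω = xRaw bis ω₀ := by
        rw [Set.mem_preimage, Set.mem_singleton_iff] at hω hω₀
        rw [hω, hω₀]
      have hσ := sigCode_eq_of_xRaw hx n
      have := mem_treeCell_sigCode (bis := bis) n ω
      rwa [hσ] at this
    have hbound : ∀ n : ℕ, μ (xRaw bis ⁻¹' {x}) ≤ (3/4 : ℝ≥0∞) ^ n := by
      intro n
      calc μ (xRaw bis ⁻¹' {x}) ≤ μ (treeCell bis (sigCode bis n ω₀)) := measure_mono (hsub n)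
      _ ≤ (3/4 : ℝ≥0∞) ^ (sigCode bis n ω₀).length := treeCell_measure_le hbis _
      _ = (3/4 : ℝ≥0∞) ^ n := by
        congr 1
        induction n with
        | zero => rfl
        | succ n ihn => rw [sigCode_succ, List.length_cons, ihn]
    have htend : Tendsto (fun n : ℕ => (3/4 : ℝ≥0∞) ^ n) atTop (𝓝 0) :=
      ENNReal.tendsto_pow_atTop_nhds_zero_of_lt_one
        (by rw [ENNReal.div_lt_iff] <;> norm_num)
    exact le_antisymm (ge_of_tendsto' htend hbound) zero_le
  · rw [Set.not_nonempty_iff_eq_empty] at hne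
    rw [hne, measure_empty]

end Tree3

section CDF
open Set Filter
open scoped Topology

lemma cdf_cont {ν : Measure ℝ} [IsProbabilityMeasure ν] [NullSingletonClass ν] :
    Continuous (cdf ν) := by
  rw [continuous_iff_continuousAt]
  intro x
  have h1 : Function.rightLim (cdf ν) x = cdf ν x := (cdf ν).rightLim_eq x
  have h2 : Function.leftLim (cdf ν) x = cdf ν x := by
    have hsing := (cdf ν).measure_singleton x
    rw [measure_cdf (μ := ν)] at hsing
    rw [measure_singleton x] at hsing
    have hle : cdf ν x - Function.leftLim (cdf ν) x ≤ 0 :=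
      ENNReal.ofReal_eq_zero.mp hsing.symm
    have hge : Function.leftLim (cdf ν) x ≤ cdf ν x := (monotone_cdf ν).leftLim_le le_rfl
    linarith
  exact (monotone_cdf ν).continuousAt_iff_leftLim_eq_rightLim.mpr (h2.trans h1.symm)

lemma map_cdf_uniform {ν : Measure ℝ} [IsProbabilityMeasure ν] [NullSingletonClass ν] :
    ν.map (cdf ν) = (volume : Measure ℝ).restrict (Set.Icc 0 1) := by
  have hFmeas : Measurable (cdf ν : ℝ → ℝ) := (monotone_cdf ν).measurable
  have hFcont : Continuous (cdf ν : ℝ → ℝ) := cdf_cont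
  have hprob : IsProbabilityMeasure (ν.map (cdf ν)) :=
    Measure.isProbabilityMeasure_map hFmeas.aemeasurable
  refine MeasureTheory.Measure.ext_of_Iic _ _ (fun t => ?_)
  rw [Measure.map_apply hFmeas measurableSet_Iic, Measure.restrict_apply measurableSet_Iic]
  rcases lt_or_ge t 0 with ht | ht
  · have h1 : (cdf ν : ℝ → ℝ) ⁻¹' Iic t = ∅ := by
      ext x
      simp only [mem_preimage, mem_Iic, mem_empty_iff_false, iff_false, not_le]
      exact lt_of_lt_of_le ht (cdf_nonneg ν x)
    have h2 : Iic t ∩ Icc (0:ℝ) 1 = ∅ := by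
      ext x
      simp only [mem_inter_iff, mem_Iic, mem_Icc, mem_empty_iff_false, iff_false, not_and]
      intro hx hc
      linarith
    rw [h1, h2]
    simp
  rcases le_or_gt 1 t with ht1 | ht1
  · have h1 : (cdf ν : ℝ → ℝ) ⁻¹' Iic t = univ := by
      ext x
      simp only [mem_preimage, mem_Iic, mem_univ, iff_true]
      exact (cdf_le_one ν x).trans ht1
    have h2 : Iic t ∩ Icc (0:ℝ) 1 = Icc 0 1 := by
      rw [Set.inter_eq_self_of_subset_right]
      intro x hx
      exact hx.2.trans ht1
    rw [h1, h2, Real.volume_Icc, measure_univ]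
    norm_num
  · have h2 : Iic t ∩ Icc (0:ℝ) 1 = Icc 0 t := by
      ext x
      simp only [mem_inter_iff, mem_Iic, mem_Icc]
      constructor
      · rintro ⟨h1, h2, h3⟩; exact ⟨h2, h1⟩
      · rintro ⟨h1, h2⟩; exact ⟨h2, h1, h2.trans ht1.le⟩
    rw [h2, Real.volume_Icc]
    by_cases hne : ((cdf ν : ℝ → ℝ) ⁻¹' Iic t).Nonempty
    · have hclosed : IsClosed ((cdf ν : ℝ → ℝ) ⁻¹' Iic t) := isClosed_Iic.preimage hFcont
      have hbdd : BddAbove ((cdf ν : ℝ → ℝ) ⁻¹' Iic t) := by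
        by_contra hb
        have hev : ∀ᶠ x in atTop, t < cdf ν x :=
          (tendsto_cdf_atTop ν).eventually_const_lt ht1
        obtain ⟨x0, hx0⟩ := hev.exists
        rw [not_bddAbove_iff] at hb
        obtain ⟨y, hyS, hy⟩ := hb x0
        have h3 : cdf ν y ≤ t := hyS
        have h4 : t < cdf ν y := lt_of_lt_of_le hx0 ((monotone_cdf ν) hy.le)
        linarith
      set a := sSup ((cdf ν : ℝ → ℝ) ⁻¹' Iic t) with ha
      have haS : a ∈ (cdf ν : ℝ → ℝ) ⁻¹' Iic t := hclosed.csSup_mem hne hbdd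
      have hSeq : (cdf ν : ℝ → ℝ) ⁻¹' Iic t = Iic a := by
        ext x
        constructor
        · intro hx; exact le_csSup hbdd hx
        · intro hx
          exact le_trans ((monotone_cdf ν) hx) haS
      have hFa : cdf ν a = t := by
        refine le_antisymm haS ?_
        by_contra hlt
        push_neg at hlt
        have hev : ∀ᶠ x in 𝓝 a, cdf ν x < t :=
          (hFcont.continuousAt (x := a)).eventually_lt_const hlt
        have hev' : ∀ᶠ x in 𝓝[>] a, cdf ν x < t := hev.filter_mono nhdsWithin_le_nhds
        have hmem : ∀ᶠ x in 𝓝[>] a, x ∈ Ioi a := self_mem_nhdsWithin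
        obtain ⟨x, hxt, hxa⟩ := (hev'.and hmem).exists
        have : x ≤ a := le_csSup hbdd hxt.le
        exact absurd this (not_le.mpr hxa)
      rw [hSeq, ← ofReal_cdf ν a, hFa, sub_zero]
    · rw [Set.not_nonempty_iff_eq_empty] at hne
      have ht0 : t ≤ 0 := by
        by_contra h
        push_neg at h
        have hev : ∀ᶠ x in atBot, cdf ν x < t := (tendsto_cdf_atBot ν).eventually_lt_const h
        obtain ⟨x, hx⟩ := hev.exists
        have : x ∈ (cdf ν : ℝ → ℝ) ⁻¹' Iic t := hx.le
        rw [hne] at this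
        exact this
      have ht00 : t = 0 := le_antisymm ht0 ht
      rw [hne, ht00]
      simp

end CDF

theorem exists_uniform_indep_of_atomless_indep {Ω : Type*} (m1 : MeasurableSpace Ω)
    (mB : MeasurableSpace Ω) [m2 : MeasurableSpace Ω] (hm1 : m1 ≤ m2) (hmB : mB ≤ m2)
    (μ : Measure Ω) [IsProbabilityMeasure μ]
    (hatomless : @SigmaAlgebraAtomless Ω mB m2 μ) (hindep : @Indep Ω mB m1 m2 μ) :
    ∃ U : Ω → ℝ, Measurable U ∧ (∀ ω, U ω ∈ Set.Icc (0 : ℝ) 1) ∧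
      μ.map U = (volume : Measure ℝ).restrict (Set.Icc 0 1) ∧
      @Indep Ω (MeasurableSpace.comap U inferInstance) m1 m2 μ := by
  classical
  have h1234 : (2⁻¹ : ℝ≥0∞) ≤ 3/4 := by
    rw [ENNReal.le_div_iff_mul_le (Or.inl (by norm_num)) (Or.inl (by norm_num))]
    rw [show (4:ℝ≥0∞) = 2*2 by norm_num, ← mul_assoc,
      ENNReal.inv_mul_cancel (by norm_num) (by norm_num), one_mul]
    norm_num
  have hbisex : ∀ A : Set Ω, ∃ B : Set Ω, MeasurableSet[mB] A →
      (MeasurableSet[mB] B ∧ B ⊆ A ∧ μ B ≤ 3/4 * μ A ∧ μ (A \ B) ≤ 3/4 * μ A) := by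
    intro A
    by_cases hA : MeasurableSet[mB] A
    · rcases eq_or_lt_of_le (zero_le (a := μ A)) with h0 | h0
      · refine ⟨∅, fun _ => ⟨@MeasurableSet.empty _ mB, Set.empty_subset _, ?_, ?_⟩⟩
        · simp
        · rw [Set.diff_empty, ← h0]
          exact zero_le
      · obtain ⟨B, hBm, hBA, hB4, hB2⟩ := aux_mid hmB hatomless hA h0
        refine ⟨B, fun _ => ⟨hBm, hBA, ?_, ?_⟩⟩
        · calc μ B ≤ μ A / 2 := hB2
          _ = 2⁻¹ * μ A := by rw [div_eq_mul_inv, mul_comm]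
          _ ≤ 3/4 * μ A := by gcongr
        · have hd : μ (A \ B) = μ A - μ B :=
            measure_diff hBA (hmB _ hBm).nullMeasurableSet (measure_ne_top μ B)
          rw [hd]
          refine tsub_le_iff_right.mpr ?_
          have h14 : (3/4 : ℝ≥0∞) + 1/4 = 1 := by
            rw [ENNReal.div_add_div_same, show (3:ℝ≥0∞) + 1 = 4 by norm_num,
              ENNReal.div_self (by norm_num) (by norm_num)]
          have h2 : μ A = (3/4 : ℝ≥0∞) * μ A + (1/4 : ℝ≥0∞) * μ A := by
            rw [← add_mul, h14, one_mul]
          have h3 : (1/4 : ℝ≥0∞) * μ A ≤ μ B := by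
            have h4 : (1/4 : ℝ≥0∞) * μ A = μ A / 4 := by
              rw [one_div, mul_comm, ← div_eq_mul_inv]
            rw [h4]
            exact hB4.le
          conv_lhs => rw [h2]
          exact add_le_add_right h3 _
    · exact ⟨∅, fun h => absurd h hA⟩
  choose bis hbis using hbisex
  have hb : ∀ A : Set Ω, MeasurableSet[mB] A → (MeasurableSet[mB] (bis A) ∧ bis A ⊆ A ∧
      μ (bis A) ≤ 3/4 * μ A ∧ μ (A \ bis A) ≤ 3/4 * μ A) := hbis
  have hbm : ∀ A : Set Ω, MeasurableSet[mB] A → MeasurableSet[mB] (bis A) :=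
    fun A hA => (hb A hA).1
  set X := xRaw bis with hX
  have hXmB : Measurable[mB] X := xRaw_meas hbm
  have hXm : Measurable X := hXmB.mono hmB le_rfl
  set ν := μ.map X with hν
  have hνprob : IsProbabilityMeasure ν := Measure.isProbabilityMeasure_map hXm.aemeasurable
  have hnoatom : NullSingletonClass ν := by
    refine ⟨fun x => ?_⟩
    rw [hν, Measure.map_apply hXm (measurableSet_singleton x)]
    exact xRaw_fiber_null (mB := mB) hb x
  set U : Ω → ℝ := fun ω => cdf ν (X ω) with hU
  have hcdfmeas : Measurable (cdf ν : ℝ → ℝ) := (monotone_cdf ν).measurable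
  have hUmB : Measurable[mB] U := hcdfmeas.comp hXmB
  have hUm : Measurable U := hUmB.mono hmB le_rfl
  refine ⟨U, hUm, ?_, ?_, ?_⟩
  · intro ω
    exact ⟨cdf_nonneg ν _, cdf_le_one ν _⟩
  · have hmm : μ.map U = ν.map (cdf ν) := by
      rw [hν, Measure.map_map hcdfmeas hXm]
      rfl
    rw [hmm, map_cdf_uniform]
  · exact indep_of_indep_of_le_left hindep hUmB.comap_le
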